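/- Let p ∈ (0,1) and let g : ℝ → [0,1] be a measurable function with ∫_ℝ g(s) φ(s) ds = p. Then ∫_ℝ s · g(s) · φ(s) ds ≤ φ(Φ⁻¹(p)). -/

import Mathlib

open MeasureTheory Real

/-- Standard normal density `φ`. -/
noncomputable def stdGaussPDF (t : ℝ) : ℝ :=
  (Real.sqrt (2 * π))⁻¹ * Real.exp (-t ^ 2 / 2)

/-- Standard normal cumulative distribution function `Φ`. -/
noncomputable def stdGaussCDF (x : ℝ) : ℝ := ∫ t in Set.Iic x, stdGaussPDF t

/-- Standard normal quantile function `Φ⁻¹`. -/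
noncomputable def stdGaussQuantile : ℝ → ℝ := Function.invFun stdGaussCDF

open Set Filter Topology

lemma pdf_pos (x : ℝ) : 0 < stdGaussPDF x := by
  unfold stdGaussPDF
  have : 0 < Real.sqrt (2 * π) := Real.sqrt_pos.2 (by positivity)
  positivity

lemma pdf_nonneg (x : ℝ) : 0 ≤ stdGaussPDF x := (pdf_pos x).le

lemma pdf_cont : Continuous stdGaussPDF := by
  unfold stdGaussPDF
  fun_prop

lemma pdf_even (x : ℝ) : stdGaussPDF (-x) = stdGaussPDF x := by
  simp [stdGaussPDF, neg_pow]

lemma pdf_integrable : Integrable stdGaussPDF := by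
  have h : Integrable (fun x : ℝ => Real.exp (-(2⁻¹) * x ^ 2)) :=
    integrable_exp_neg_mul_sq (by norm_num)
  have := h.const_mul (Real.sqrt (2 * π))⁻¹
  refine this.congr (Eventually.of_forall fun x => ?_)
  unfold stdGaussPDF
  ring_nf

lemma mul_pdf_integrable : Integrable (fun x : ℝ => x * stdGaussPDF x) := by
  have h : Integrable (fun x : ℝ => x * Real.exp (-(2⁻¹) * x ^ 2)) :=
    integrable_mul_exp_neg_mul_sq (by norm_num)
  have := h.const_mul (Real.sqrt (2 * π))⁻¹
  refine this.congr (Eventually.of_forall fun x => ?_)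
  unfold stdGaussPDF
  ring_nf

lemma pdf_integral_one : ∫ x, stdGaussPDF x = 1 := by
  have h : stdGaussPDF = ProbabilityTheory.gaussianPDFReal 0 1 := by
    funext x
    simp [stdGaussPDF, ProbabilityTheory.gaussianPDFReal, one_div]
  rw [h]
  exact ProbabilityTheory.integral_gaussianPDFReal_eq_one 0 one_ne_zero

lemma hasDerivAt_negpdf (x : ℝ) :
    HasDerivAt (fun y : ℝ => -stdGaussPDF y) (x * stdGaussPDF x) x := by
  have h1 : HasDerivAt (fun y : ℝ => -y ^ 2 / 2) (-x) x := by
    have := ((hasDerivAt_pow 2 x).neg).div_const 2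
    simpa using this.congr_deriv (by ring)
  have h2 : HasDerivAt (fun y : ℝ => Real.exp (-y ^ 2 / 2))
      (Real.exp (-x ^ 2 / 2) * (-x)) x := h1.exp
  have h3 := (h2.const_mul (Real.sqrt (2 * π))⁻¹).neg
  have : -((Real.sqrt (2 * π))⁻¹ * (Real.exp (-x ^ 2 / 2) * (-x))) = x * stdGaussPDF x := by
    unfold stdGaussPDF; ring
  rw [this] at h3
  exact h3.congr_of_eventuallyEq (Eventually.of_forall fun y => rfl)

lemma pdf_tendsto_atTop : Tendsto stdGaussPDF atTop (𝓝 0) := by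
  unfold stdGaussPDF
  rw [show (0:ℝ) = (Real.sqrt (2 * π))⁻¹ * 0 by ring]
  apply Tendsto.const_mul
  apply Real.tendsto_exp_atBot.comp
  have h : Tendsto (fun x : ℝ => x ^ 2 / 2) atTop atTop :=
    (tendsto_pow_atTop two_ne_zero).atTop_div_const (by norm_num)
  have := tendsto_neg_atBot_iff.2 h
  exact this.congr fun x => by ring

lemma pdf_tendsto_atBot : Tendsto stdGaussPDF atBot (𝓝 0) := by
  have := pdf_tendsto_atTop.comp tendsto_neg_atBot_atTop
  refine this.congr fun x => pdf_even x

lemma integral_Ioi_mul_pdf (c : ℝ) :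
    ∫ x in Ioi c, x * stdGaussPDF x = stdGaussPDF c := by
  have := integral_Ioi_of_hasDerivAt_of_tendsto'
    (f := fun y => -stdGaussPDF y) (f' := fun y => y * stdGaussPDF y) (a := c) (m := 0)
    (fun x _ => hasDerivAt_negpdf x) (mul_pdf_integrable.integrableOn)
    (by simpa using pdf_tendsto_atTop.neg)
  simpa using this

lemma integral_Iic_neg_mul_pdf (c : ℝ) :
    ∫ x in Iic c, -(x * stdGaussPDF x) = stdGaussPDF c := by
  have := integral_Iic_of_hasDerivAt_of_tendsto'
    (f := stdGaussPDF) (f' := fun y => -(y * stdGaussPDF y)) (a := c) (m := 0)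
    (fun x _ => by simpa using (hasDerivAt_negpdf x).fun_neg) (mul_pdf_integrable.neg.integrableOn)
    pdf_tendsto_atBot
  simpa using this

lemma cdf_add_Ioi (c : ℝ) : stdGaussCDF c + ∫ x in Ioi c, stdGaussPDF x = 1 := by
  rw [show stdGaussCDF c = ∫ x in Iic c, stdGaussPDF x from rfl,
    intervalIntegral.integral_Iic_add_Ioi pdf_integrable.integrableOn pdf_integrable.integrableOn,
    pdf_integral_one]

lemma cdf_neg (x : ℝ) : stdGaussCDF (-x) = 1 - stdGaussCDF x := by
  have h : stdGaussCDF x = ∫ t in Ioi (-x), stdGaussPDF t := by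
    rw [show stdGaussCDF x = ∫ t in Iic x, stdGaussPDF t from rfl]
    rw [← integral_comp_neg_Iic x stdGaussPDF]
    exact setIntegral_congr_fun measurableSet_Iic fun t _ => (pdf_even t).symm
  have := cdf_add_Ioi (-x)
  linarith [this, h]

lemma cdf_cont : Continuous stdGaussCDF := by
  have key : ∀ x : ℝ, stdGaussCDF x = stdGaussCDF 0 + ∫ t in (0:ℝ)..x, stdGaussPDF t := by
    intro x
    have := intervalIntegral.integral_Iic_sub_Iic (μ := volume) (f := stdGaussPDF) (a := (0:ℝ)) (b := x)
      pdf_integrable.integrableOn pdf_integrable.integrableOn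
    rw [show stdGaussCDF x = ∫ t in Iic x, stdGaussPDF t from rfl,
      show stdGaussCDF 0 = ∫ t in Iic (0:ℝ), stdGaussPDF t from rfl]
    linarith [this]
  have : Continuous fun x : ℝ => stdGaussCDF 0 + ∫ t in (0:ℝ)..x, stdGaussPDF t := by
    apply continuous_const.add
    apply continuous_iff_continuousAt.2
    intro x
    exact (intervalIntegral.integral_hasDerivAt_right
      (pdf_integrable.intervalIntegrable)
      pdf_cont.measurable.stronglyMeasurable.stronglyMeasurableAtFilter
      pdf_cont.continuousAt).continuousAt
  exact this.congr fun x => (key x).symm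

lemma intIoi_le_pdf {x : ℝ} (hx : 1 ≤ x) :
    ∫ t in Ioi x, stdGaussPDF t ≤ stdGaussPDF x := by
  rw [← integral_Ioi_mul_pdf x]
  apply setIntegral_mono_on pdf_integrable.integrableOn mul_pdf_integrable.integrableOn
    measurableSet_Ioi
  intro t ht
  have h1 : 1 ≤ t := hx.trans (le_of_lt ht)
  nlinarith [pdf_nonneg t]

lemma cdf_tendsto_atTop : Tendsto stdGaussCDF atTop (𝓝 1) := by
  have h : ∀ x : ℝ, stdGaussCDF x = 1 - ∫ t in Ioi x, stdGaussPDF t := by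
    intro x; linarith [cdf_add_Ioi x]
  have htail : Tendsto (fun x : ℝ => ∫ t in Ioi x, stdGaussPDF t) atTop (𝓝 0) := by
    apply tendsto_of_tendsto_of_tendsto_of_le_of_le' tendsto_const_nhds pdf_tendsto_atTop
    · exact Eventually.of_forall fun x => setIntegral_nonneg measurableSet_Ioi
        fun t _ => pdf_nonneg t
    · filter_upwards [eventually_ge_atTop (1:ℝ)] with x hx using intIoi_le_pdf hx
  have := (tendsto_const_nhds (x := (1:ℝ)) (f := atTop)).sub htail
  rw [sub_zero] at this
  exact this.congr fun x => (h x).symm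

lemma cdf_nonneg (x : ℝ) : 0 ≤ stdGaussCDF x :=
  setIntegral_nonneg measurableSet_Iic fun t _ => pdf_nonneg t

lemma cdf_tendsto_atBot : Tendsto stdGaussCDF atBot (𝓝 0) := by
  have h : ∀ x : ℝ, stdGaussCDF (-x) = 1 - stdGaussCDF x := cdf_neg
  have := (tendsto_const_nhds (x := (1:ℝ)) (f := atTop)).sub cdf_tendsto_atTop
  rw [sub_self] at this
  have h2 : Tendsto (fun x : ℝ => stdGaussCDF (-x)) atTop (𝓝 0) :=
    this.congr fun x => (h x).symm
  have h3 := h2.comp tendsto_neg_atBot_atTop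
  exact h3.congr fun x => by simp [Function.comp]

lemma cdf_quantile {p : ℝ} (hp : p ∈ Set.Ioo (0:ℝ) 1) :
    stdGaussCDF (stdGaussQuantile p) = p := by
  obtain ⟨a, ha⟩ := (cdf_tendsto_atBot.eventually_lt_const hp.1).exists
  obtain ⟨b, hb⟩ := (cdf_tendsto_atTop.eventually_const_lt hp.2).exists
  have hmem : p ∈ uIcc (stdGaussCDF a) (stdGaussCDF b) :=
    Set.mem_uIcc.2 (Or.inl ⟨ha.le, hb.le⟩)
  obtain ⟨c, _, hc⟩ := intermediate_value_uIcc (cdf_cont.continuousOn (s := uIcc a b)) hmem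
  exact Function.invFun_eq ⟨c, hc⟩

/-- **Value of the unconstrained one-dimensional problem.** Every measurable
`g : ℝ → [0,1]` with `∫ g φ = p` satisfies `∫ s g(s) φ(s) ds ≤ φ(Φ⁻¹(p))`. -/
theorem unconstrained_value_bound (p : ℝ) (hp : p ∈ Set.Ioo (0 : ℝ) 1)
    (g : ℝ → ℝ) (hgmeas : Measurable g)
    (hrange : ∀ s, g s ∈ Set.Icc (0 : ℝ) 1)
    (hmass : ∫ s, g s * stdGaussPDF s = p) :
    ∫ s, s * g s * stdGaussPDF s ≤ stdGaussPDF (stdGaussQuantile p) := by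
  set q := stdGaussQuantile p with hqdef
  have hq : stdGaussCDF q = p := cdf_quantile hp
  set c := -q with hcdef
  have hcdf_c : stdGaussCDF c = 1 - p := by rw [hcdef, cdf_neg, hq]
  -- mass of (Ici c)
  have hIci : ∫ s in Ici c, stdGaussPDF s = p := by
    have h1 := cdf_add_Ioi c
    rw [integral_Ici_eq_integral_Ioi]
    linarith [h1, hcdf_c]
  have hIci_mul : ∫ s in Ici c, s * stdGaussPDF s = stdGaussPDF c := by
    rw [integral_Ici_eq_integral_Ioi]; exact integral_Ioi_mul_pdf c
  -- integrability facts
  have hgphi_int : Integrable (fun s => g s * stdGaussPDF s) := by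
    refine pdf_integrable.mono' (hgmeas.mul pdf_cont.measurable).aestronglyMeasurable
      (Eventually.of_forall fun s => ?_)
    have h := hrange s
    rw [Real.norm_eq_abs, abs_mul, abs_of_nonneg h.1, abs_of_nonneg (pdf_nonneg s)]
    exact mul_le_of_le_one_left (pdf_nonneg s) h.2
  have hsgphi_int : Integrable (fun s => s * g s * stdGaussPDF s) := by
    refine mul_pdf_integrable.abs.mono'
      ((measurable_id.mul hgmeas).mul pdf_cont.measurable).aestronglyMeasurable
      (Eventually.of_forall fun s => ?_)
    have h := hrange s
    rw [Real.norm_eq_abs, abs_mul, abs_mul, abs_mul, abs_of_nonneg h.1,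
      abs_of_nonneg (pdf_nonneg s)]
    have : |s| * g s * stdGaussPDF s ≤ |s| * 1 * stdGaussPDF s := by
      apply mul_le_mul_of_nonneg_right _ (pdf_nonneg s)
      exact mul_le_mul_of_nonneg_left h.2 (abs_nonneg s)
    simpa using this
  -- the indicator function
  set ind : ℝ → ℝ := (Ici c).indicator (fun _ => (1:ℝ)) with hinddef
  set h : ℝ → ℝ := fun s => (s - c) * (ind s - g s) * stdGaussPDF s with hhdef
  have hA_eq : (fun s => (s - c) * ind s * stdGaussPDF s)
      = (Ici c).indicator (fun s => (s - c) * stdGaussPDF s) := by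
    funext s
    by_cases hs : s ∈ Ici c
    · simp [hinddef, Set.indicator_of_mem hs]
    · simp [hinddef, Set.indicator_of_notMem hs]
  have hsub_int : Integrable (fun s => (s - c) * stdGaussPDF s) := by
    have := mul_pdf_integrable.sub (pdf_integrable.const_mul c)
    exact this.congr (Eventually.of_forall fun s => by simp only [Pi.sub_apply]; ring)
  have hA_int : Integrable (fun s => (s - c) * ind s * stdGaussPDF s) := by
    rw [hA_eq]
    exact hsub_int.indicator measurableSet_Ici
  have hB_int : Integrable (fun s => (s - c) * g s * stdGaussPDF s) := by
    have := hsgphi_int.sub (hgphi_int.const_mul c)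
    exact this.congr (Eventually.of_forall fun s => by simp only [Pi.sub_apply]; ring)
  have hh_int : Integrable h := by
    have := hA_int.sub hB_int
    exact this.congr (Eventually.of_forall fun s => by simp only [Pi.sub_apply, hhdef]; ring)
  -- nonnegativity
  have hh_nonneg : ∀ s, 0 ≤ h s := by
    intro s
    rw [hhdef]
    simp only
    rcases le_or_gt c s with hs | hs
    · have hind : ind s = 1 := Set.indicator_of_mem hs _
      rw [hind]
      have := hrange s
      have h1 : 0 ≤ s - c := by linarith
      have h2 : 0 ≤ 1 - g s := by linarith [this.2]
      exact mul_nonneg (mul_nonneg h1 h2) (pdf_nonneg s)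
    · have hind : ind s = 0 := Set.indicator_of_notMem (by simpa using hs) _
      rw [hind]
      have := hrange s
      have h1 : s - c ≤ 0 := by linarith
      have h2 : 0 - g s ≤ 0 := by linarith [this.1]
      have h3 : 0 ≤ (s - c) * (0 - g s) := mul_nonneg_iff.2 (Or.inr ⟨h1, h2⟩)
      exact mul_nonneg h3 (pdf_nonneg s)
  have hint_nonneg : 0 ≤ ∫ s, h s := integral_nonneg hh_nonneg
  -- compute ∫ A
  have hA_val : ∫ s, (s - c) * ind s * stdGaussPDF s = stdGaussPDF c - c * p := by
    rw [hA_eq, integral_indicator measurableSet_Ici]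
    have : ∫ s in Ici c, (s - c) * stdGaussPDF s
        = (∫ s in Ici c, s * stdGaussPDF s) - c * ∫ s in Ici c, stdGaussPDF s := by
      rw [← integral_const_mul, ← integral_sub mul_pdf_integrable.integrableOn
        (pdf_integrable.integrableOn.const_mul c)]
      exact setIntegral_congr_fun measurableSet_Ici fun s _ => by ring
    rw [this, hIci, hIci_mul]
  have hB_val : ∫ s, (s - c) * g s * stdGaussPDF s
      = (∫ s, s * g s * stdGaussPDF s) - c * p := by
    rw [← hmass, ← integral_const_mul, ← integral_sub hsgphi_int (hgphi_int.const_mul c)]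
    exact integral_congr_ae (Eventually.of_forall fun s => by ring)
  have hh_val : ∫ s, h s = stdGaussPDF c - ∫ s, s * g s * stdGaussPDF s := by
    have : ∫ s, h s = (∫ s, (s - c) * ind s * stdGaussPDF s)
        - ∫ s, (s - c) * g s * stdGaussPDF s := by
      rw [← integral_sub hA_int hB_int]
      exact integral_congr_ae (Eventually.of_forall fun s => by rw [hhdef]; ring)
    rw [this, hA_val, hB_val]; ring
  have hfin : ∫ s, s * g s * stdGaussPDF s ≤ stdGaussPDF c := by
    rw [hh_val] at hint_nonneg; linarith
  calc ∫ s, s * g s * stdGaussPDF s ≤ stdGaussPDF c := hfin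
    _ = stdGaussPDF q := by rw [hcdef, pdf_even]
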